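/- Let T ≥ 1, and let ζ_1,…,ζ_T ∈ ℝ^n and z_1,…,z_T ∈ ℝ^m be given data vectors. Define Φ = (1/T)∑_{t=1}^T ζ_t ζ_tᵀ, Ψ = (1/T)∑_{t=1}^T ζ_t z_tᵀ, Σ = (1/T)∑_{t=1}^T z_t z_tᵀ. Let P ∈ ℝ^{m×m} be symmetric positive semidefinite, assume Σ_P := Σ + (1/T)P is positive definite and that Π_P* := Φ − Ψ Σ_P⁻¹ Ψᵀ is positive definite. Then the penalized objective L_P(Γ,Π) := −T·log det Π − ∑_{t=1}^T (ζ_t − Γ z_t)ᵀ Π⁻¹ (ζ_t − Γ z_t) − tr(Π⁻¹ Γ P Γᵀ), over Γ ∈ ℝ^{n×m} and symmetric positive definite Π ∈ ℝ^{n×n}, attains its maximum uniquely at Γ = Ψ Σ_P⁻¹ and Π = Π_P*. -/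

import Mathlib

open Matrix BigOperators


variable {n : Type*} [Fintype n] [DecidableEq n]

open scoped MatrixOrder in
noncomputable def Matrix.PosSemidef.sqrt {A : Matrix n n ℝ} (_ : A.PosSemidef) : Matrix n n ℝ :=
  CFC.sqrt A

open scoped MatrixOrder in
lemma Matrix.PosSemidef.posSemidef_sqrt {A : Matrix n n ℝ} (hA : A.PosSemidef) :
    hA.sqrt.PosSemidef :=
  (CFC.sqrt_nonneg A).posSemidef

open scoped MatrixOrder in
lemma Matrix.PosSemidef.sqrt_mul_self {A : Matrix n n ℝ} (hA : A.PosSemidef) :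
    hA.sqrt * hA.sqrt = A :=
  CFC.sqrt_mul_sqrt_self A hA.nonneg

lemma my_trace_eq_sum_eigenvalues {A : Matrix n n ℝ} (hA : A.IsHermitian) :
    A.trace = ∑ i, hA.eigenvalues i := by
  conv_lhs => rw [hA.spectral_theorem]
  rw [Unitary.conjStarAlgAut_apply, Matrix.trace_mul_cycle, Unitary.coe_star_mul_self, Matrix.one_mul, Matrix.trace_diagonal]
  simp

lemma psd_trace {A : Matrix n n ℝ} (hA : A.PosSemidef) :
    0 ≤ A.trace ∧ (A.trace = 0 ↔ A = 0) := by
  have h := hA.isHermitian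
  have hnn : ∀ i, 0 ≤ h.eigenvalues i := hA.eigenvalues_nonneg
  have ht : A.trace = ∑ i, h.eigenvalues i := my_trace_eq_sum_eigenvalues h
  constructor
  · rw [ht]; exact Finset.sum_nonneg fun i _ => hnn i
  constructor
  · intro h0
    rw [ht] at h0
    have : ∀ i ∈ Finset.univ, h.eigenvalues i = 0 :=
      (Finset.sum_eq_zero_iff_of_nonneg (fun i _ => hnn i)).mp h0
    have hd : Matrix.diagonal (RCLike.ofReal ∘ h.eigenvalues) = (0 : Matrix n n ℝ) := by
      ext i j
      by_cases hij : i = j <;> simp [Matrix.diagonal, hij]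
      exact this j (Finset.mem_univ j)
    rw [h.spectral_theorem, hd]
    simp
  · intro h0; rw [h0]; simp

lemma pd_trace_log {X : Matrix n n ℝ} (hX : X.PosDef) :
    (Fintype.card n : ℝ) ≤ X.trace - Real.log X.det ∧
    (X.trace - Real.log X.det = (Fintype.card n : ℝ) ↔ X = 1) := by
  have h := hX.isHermitian
  have hpos : ∀ i, 0 < h.eigenvalues i := hX.eigenvalues_pos
  have ht : X.trace = ∑ i, h.eigenvalues i := my_trace_eq_sum_eigenvalues h
  have hdet : X.det = ∏ i, h.eigenvalues i := by
    simpa using h.det_eq_prod_eigenvalues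
  have hlog : Real.log X.det = ∑ i, Real.log (h.eigenvalues i) := by
    rw [hdet, Real.log_prod]
    exact fun i _ => (hpos i).ne'
  have key : X.trace - Real.log X.det = ∑ i, (h.eigenvalues i - Real.log (h.eigenvalues i)) := by
    rw [ht, hlog, Finset.sum_sub_distrib]
  have hterm : ∀ i, 1 ≤ h.eigenvalues i - Real.log (h.eigenvalues i) := by
    intro i
    have := Real.log_le_sub_one_of_pos (hpos i)
    linarith
  have hcard : (Fintype.card n : ℝ) = ∑ _i : n, (1 : ℝ) := by simp
  constructor
  · rw [key, hcard]
    exact Finset.sum_le_sum fun i _ => hterm i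
  constructor
  · intro heq
    have hall : ∀ i ∈ Finset.univ, h.eigenvalues i - Real.log (h.eigenvalues i) = 1 := by
      by_contra hc
      push_neg at hc
      obtain ⟨i, hi, hne⟩ := hc
      have : ∑ _i : n, (1:ℝ) < ∑ i, (h.eigenvalues i - Real.log (h.eigenvalues i)) :=
        Finset.sum_lt_sum (fun j _ => hterm j) ⟨i, hi, lt_of_le_of_ne (hterm i) (Ne.symm hne)⟩
      rw [key, hcard] at heq
      linarith
    have hone : ∀ i, h.eigenvalues i = 1 := by
      intro i
      by_contra hne
      have := Real.log_lt_sub_one_of_pos (hpos i) hne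
      have := hall i (Finset.mem_univ i)
      linarith
    have hd : Matrix.diagonal (RCLike.ofReal ∘ h.eigenvalues) = (1 : Matrix n n ℝ) := by
      ext i j
      by_cases hij : i = j <;> simp [Matrix.diagonal, Matrix.one_apply, hij, hone]
    calc X = _ := h.spectral_theorem
    _ = 1 := by rw [hd, Unitary.conjStarAlgAut_apply, Matrix.mul_one]; exact (Matrix.mem_unitaryGroup_iff).mp h.eigenvectorUnitary.2
  · intro h1
    subst h1
    simp [Matrix.trace_one]

lemma mulVec_ne_zero_of_det {S : Matrix n n ℝ} (hdet : S.det ≠ 0) {x : n → ℝ}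
    (hx : x ≠ 0) : S *ᵥ x ≠ 0 := by
  intro h
  apply hx
  have := congrArg (fun v => S⁻¹ *ᵥ v) h
  simpa [Matrix.mulVec_mulVec, Matrix.nonsing_inv_mul S (isUnit_iff_ne_zero.mpr hdet)] using this

lemma psd_det_posDef {S : Matrix n n ℝ} (hS : S.PosSemidef) (hdet : S.det ≠ 0) : S.PosDef := by
  refine Matrix.PosDef.of_dotProduct_mulVec_pos hS.1 fun x hx => ?_
  have h0 : star x ⬝ᵥ S *ᵥ x ≠ 0 := by
    intro heq
    exact mulVec_ne_zero_of_det hdet hx ((hS.dotProduct_mulVec_zero_iff x).mp heq)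
  exact lt_of_le_of_ne (hS.dotProduct_mulVec_nonneg x) (Ne.symm h0)

lemma sqrt_posDef {A : Matrix n n ℝ} (hA : A.PosDef) : hA.posSemidef.sqrt.PosDef := by
  apply psd_det_posDef hA.posSemidef.posSemidef_sqrt
  intro h
  have hs := hA.posSemidef.sqrt_mul_self
  have hdA : A.det = 0 := by
    rw [← hs, Matrix.det_mul, h, mul_zero]
  exact (ne_of_gt hA.det_pos) hdA

lemma pd_congr {S C : Matrix n n ℝ} (hS : S.PosDef) (hC : C.PosDef) :
    (S * C * S).PosDef := by
  have hdetS : S.det ≠ 0 := ne_of_gt hS.det_pos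
  have hSherm : Sᵀ = S := hS.isHermitian
  refine Matrix.PosDef.of_dotProduct_mulVec_pos ?_ fun x hx => ?_
  · show (S * C * S)ᴴ = S * C * S
    simp only [Matrix.conjTranspose_mul]
    rw [hS.isHermitian.eq, hC.isHermitian.eq, Matrix.mul_assoc]
  · have hSx : S *ᵥ x ≠ 0 := mulVec_ne_zero_of_det hdetS hx
    have hpos := hC.dotProduct_mulVec_pos hSx
    have e1 : (S * C * S) *ᵥ x = S *ᵥ (C *ᵥ (S *ᵥ x)) := by
      rw [← Matrix.mulVec_mulVec, ← Matrix.mulVec_mulVec]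
    have e2 : star x ⬝ᵥ S *ᵥ (C *ᵥ (S *ᵥ x)) = star (S *ᵥ x) ⬝ᵥ (C *ᵥ (S *ᵥ x)) := by
      rw [Matrix.dotProduct_mulVec]
      congr 1
      conv_lhs => rw [← hSherm]
      rw [Matrix.vecMul_transpose]
      simp
    rw [e1, e2]
    exact hpos

lemma pd_loglik_bound {A B : Matrix n n ℝ} (hA : A.PosDef) (hB : B.PosDef) :
    Real.log A.det + (Fintype.card n : ℝ) ≤ Real.log B.det + (B⁻¹ * A).trace ∧
    (Real.log B.det + (B⁻¹ * A).trace = Real.log A.det + (Fintype.card n : ℝ) ↔ B = A) := by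
  set S := hA.posSemidef.sqrt with hSdef
  have hSpd : S.PosDef := sqrt_posDef hA
  have hSS : S * S = A := hA.posSemidef.sqrt_mul_self
  have hdetS : S.det ≠ 0 := ne_of_gt hSpd.det_pos
  have hdetB : B.det ≠ 0 := ne_of_gt hB.det_pos
  have hXpd : (S * B⁻¹ * S).PosDef := pd_congr hSpd hB.inv
  have htr : (S * B⁻¹ * S).trace = (B⁻¹ * A).trace := by
    rw [Matrix.trace_mul_cycle, hSS, Matrix.trace_mul_comm]
  have hdetX : (S * B⁻¹ * S).det = A.det / B.det := by
    rw [Matrix.det_mul, Matrix.det_mul, Matrix.det_nonsing_inv, ← hSS, Matrix.det_mul]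
    field_simp
    exact Ring.inverse_mul_cancel _ (isUnit_iff_ne_zero.mpr hdetB)
  have hlogX : Real.log (S * B⁻¹ * S).det = Real.log A.det - Real.log B.det := by
    rw [hdetX, Real.log_div (ne_of_gt hA.det_pos) hdetB]
  obtain ⟨hle, heq⟩ := pd_trace_log hXpd
  rw [htr, hlogX] at hle heq
  constructor
  · linarith
  · constructor
    · intro h
      have hX1 : S * B⁻¹ * S = 1 := heq.mp (by linarith)
      have hinv : S⁻¹ * S = 1 := Matrix.nonsing_inv_mul S (isUnit_iff_ne_zero.mpr hdetS)
      have hinv' : S * S⁻¹ = 1 := Matrix.mul_nonsing_inv S (isUnit_iff_ne_zero.mpr hdetS)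
      have hBinv : B⁻¹ = A⁻¹ := by
        calc B⁻¹ = S⁻¹ * (S * B⁻¹ * S) * S⁻¹ := by
              rw [← Matrix.mul_assoc, ← Matrix.mul_assoc, hinv, Matrix.one_mul,
                Matrix.mul_assoc, hinv', Matrix.mul_one]
          _ = S⁻¹ * S⁻¹ := by rw [hX1, Matrix.mul_one]
          _ = (S * S)⁻¹ := by rw [Matrix.mul_inv_rev]
          _ = A⁻¹ := by rw [hSS]
      calc B = B⁻¹⁻¹ := (Matrix.nonsing_inv_nonsing_inv B (isUnit_iff_ne_zero.mpr hdetB)).symm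
        _ = A⁻¹⁻¹ := by rw [hBinv]
        _ = A := Matrix.nonsing_inv_nonsing_inv A (isUnit_iff_ne_zero.mpr (ne_of_gt hA.det_pos))
    · intro h
      rw [h, Matrix.nonsing_inv_mul A (isUnit_iff_ne_zero.mpr (ne_of_gt hA.det_pos)),
        Matrix.trace_one]

lemma trace_inv_psd {Pm D : Matrix n n ℝ} (hPm : Pm.PosDef) (hD : D.PosSemidef) :
    0 ≤ (Pm⁻¹ * D).trace ∧ ((Pm⁻¹ * D).trace = 0 ↔ D = 0) := by
  set R := hPm.inv.posSemidef.sqrt with hRdef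
  have hRpd : R.PosDef := sqrt_posDef hPm.inv
  have hRR : R * R = Pm⁻¹ := hPm.inv.posSemidef.sqrt_mul_self
  have hRherm : Rᴴ = R := hRpd.isHermitian
  have hdetR : R.det ≠ 0 := ne_of_gt hRpd.det_pos
  have hinv : R⁻¹ * R = 1 := Matrix.nonsing_inv_mul R (isUnit_iff_ne_zero.mpr hdetR)
  have hinv' : R * R⁻¹ = 1 := Matrix.mul_nonsing_inv R (isUnit_iff_ne_zero.mpr hdetR)
  have hpsd : (R * D * R).PosSemidef := by
    have := hD.mul_mul_conjTranspose_same R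
    rwa [hRherm] at this
  have htr : (Pm⁻¹ * D).trace = (R * D * R).trace := by
    rw [Matrix.trace_mul_cycle, ← hRR]
  obtain ⟨h0, hiff⟩ := psd_trace hpsd
  refine ⟨by rw [htr]; exact h0, ?_, ?_⟩
  · intro h
    have hz : R * D * R = 0 := hiff.mp (by rw [← htr]; exact h)
    calc D = R⁻¹ * (R * D * R) * R⁻¹ := by
          rw [← Matrix.mul_assoc, ← Matrix.mul_assoc, hinv, Matrix.one_mul,
            Matrix.mul_assoc, hinv', Matrix.mul_one]
      _ = 0 := by rw [hz]; simp
  · intro h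
    rw [h]
    simp

variable {m : Type*} [Fintype m] [DecidableEq m]

lemma dot_mulVec_eq_trace (A : Matrix n n ℝ) (x : n → ℝ) :
    x ⬝ᵥ A *ᵥ x = (A * vecMulVec x x).trace := by
  simp only [Matrix.trace, Matrix.diag, Matrix.mul_apply, Matrix.vecMulVec_apply,
    dotProduct, Matrix.mulVec]
  refine Finset.sum_congr rfl fun i _ => ?_
  rw [Finset.mul_sum]
  exact Finset.sum_congr rfl fun j _ => by ring

lemma vecMulVec_mulVec_left {p : Type*} [Fintype p] (Γ : Matrix n m ℝ) (zz : m → ℝ) (w : p → ℝ) :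
    vecMulVec (Γ *ᵥ zz) w = Γ * vecMulVec zz w := by
  ext i j
  simp [Matrix.vecMulVec_apply, Matrix.mul_apply, Matrix.mulVec, dotProduct,
    Finset.sum_mul]
  exact Finset.sum_congr rfl fun k _ => by ring

lemma vecMulVec_mulVec_right {p : Type*} [Fintype p] (Γ : Matrix n m ℝ) (zz : m → ℝ) (w : p → ℝ) :
    vecMulVec w (Γ *ᵥ zz) = vecMulVec w zz * Γᵀ := by
  ext i j
  simp [Matrix.vecMulVec_apply, Matrix.mul_apply, Matrix.mulVec, dotProduct,
    Finset.mul_sum]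
  exact Finset.sum_congr rfl fun k _ => by ring

lemma vecMulVec_transpose' (a : n → ℝ) (b : m → ℝ) :
    (vecMulVec a b)ᵀ = vecMulVec b a := by
  ext i j
  simp [Matrix.vecMulVec_apply, mul_comm]

lemma quad_zero {N : Matrix n m ℝ} {S : Matrix m m ℝ} (hS : S.PosDef)
    (h : N * S * Nᵀ = 0) : N = 0 := by
  set R := hS.posSemidef.sqrt with hRdef
  have hRpd : R.PosDef := sqrt_posDef hS
  have hRR : R * R = S := hS.posSemidef.sqrt_mul_self
  have hRherm : Rᴴ = R := hRpd.isHermitian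
  have hNR : (N * R) * (N * R)ᴴ = 0 := by
    rw [Matrix.conjTranspose_mul, hRherm, ← Matrix.mul_assoc, Matrix.mul_assoc N R R, hRR,
      show (Nᴴ : Matrix m n ℝ) = Nᵀ from rfl]
    exact h
  have hNR0 : N * R = 0 := Matrix.self_mul_conjTranspose_eq_zero.mp hNR
  have hinv' : R * R⁻¹ = 1 := Matrix.mul_nonsing_inv R (isUnit_iff_ne_zero.mpr (ne_of_gt hRpd.det_pos))
  calc N = N * R * R⁻¹ := by rw [Matrix.mul_assoc, hinv', Matrix.mul_one]
    _ = 0 := by rw [hNR0, Matrix.zero_mul]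

lemma vecMulVec_sub_sub (a b : n → ℝ) :
    vecMulVec (a - b) (a - b)
      = vecMulVec a a - vecMulVec a b - vecMulVec b a + vecMulVec b b := by
  ext i j
  simp [Matrix.vecMulVec_apply]
  ring

lemma sum_outer_eq {T : ℕ} (hT0 : (T:ℝ) ≠ 0)
    (ζ : Fin T → n → ℝ) (z : Fin T → m → ℝ)
    (Phi : Matrix n n ℝ) (Psi : Matrix n m ℝ) (Sig : Matrix m m ℝ)
    (hPhi : Phi = ((T : ℝ))⁻¹ • ∑ t, vecMulVec (ζ t) (ζ t))
    (hPsi : Psi = ((T : ℝ))⁻¹ • ∑ t, vecMulVec (ζ t) (z t))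
    (hSig : Sig = ((T : ℝ))⁻¹ • ∑ t, vecMulVec (z t) (z t))
    (Γ : Matrix n m ℝ) :
    ∑ t, vecMulVec (ζ t - Γ *ᵥ z t) (ζ t - Γ *ᵥ z t)
      = (T:ℝ) • (Phi - Psi * Γᵀ - Γ * Psiᵀ + Γ * Sig * Γᵀ) := by
  have hS1 : ∑ t, vecMulVec (ζ t) (ζ t) = (T:ℝ) • Phi := by
    rw [hPhi, smul_smul, mul_inv_cancel₀ hT0, one_smul]
  have hS2 : ∑ t, vecMulVec (ζ t) (z t) = (T:ℝ) • Psi := by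
    rw [hPsi, smul_smul, mul_inv_cancel₀ hT0, one_smul]
  have hS4 : ∑ t, vecMulVec (z t) (z t) = (T:ℝ) • Sig := by
    rw [hSig, smul_smul, mul_inv_cancel₀ hT0, one_smul]
  have hS3 : ∑ t, vecMulVec (z t) (ζ t) = (T:ℝ) • Psiᵀ := by
    have : ∀ t, vecMulVec (z t) (ζ t) = (vecMulVec (ζ t) (z t))ᵀ := by
      intro t; rw [vecMulVec_transpose']
    simp_rw [this]
    rw [← Matrix.transpose_sum, hS2, Matrix.transpose_smul]
  have hvv : ∀ t, vecMulVec (ζ t - Γ *ᵥ z t) (ζ t - Γ *ᵥ z t)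
      = vecMulVec (ζ t) (ζ t) - vecMulVec (ζ t) (z t) * Γᵀ
        - Γ * vecMulVec (z t) (ζ t) + Γ * (vecMulVec (z t) (z t) * Γᵀ) := by
    intro t
    rw [vecMulVec_sub_sub, vecMulVec_mulVec_right, vecMulVec_mulVec_left,
      vecMulVec_mulVec_left, vecMulVec_mulVec_right]
  simp_rw [hvv]
  rw [Finset.sum_add_distrib, Finset.sum_sub_distrib, Finset.sum_sub_distrib,
    ← Matrix.sum_mul, ← Matrix.mul_sum, ← Matrix.mul_sum, ← Matrix.sum_mul, hS1, hS2, hS3, hS4]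
  simp only [Matrix.smul_mul, Matrix.mul_smul, smul_sub, smul_add, Matrix.mul_assoc]

/-- The full regularized M-step (equations 10a–10b). With sample
moments `Φ, Ψ, Σ`, prior precision `P` symmetric positive semidefinite,
`Σ_P = Σ + (1/T)P` positive definite and `Π_P* = Φ - Ψ Σ_P⁻¹ Ψᵀ` positive
definite, the penalized objective
`L_P(Γ,Π) = -T log det Π - ∑_t (ζ_t - Γ z_t)ᵀ Π⁻¹ (ζ_t - Γ z_t) - tr(Π⁻¹ Γ P Γᵀ)`
over `Γ` and symmetric positive definite `Π` attains its maximum uniquely at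
`Γ = Ψ Σ_P⁻¹` and `Π = Π_P*`. -/
theorem stmt8 {T n m : ℕ} (hT : 1 ≤ T)
    (ζ : Fin T → Fin n → ℝ) (z : Fin T → Fin m → ℝ)
    (Phi : Matrix (Fin n) (Fin n) ℝ) (Psi : Matrix (Fin n) (Fin m) ℝ)
    (Sig : Matrix (Fin m) (Fin m) ℝ)
    (hPhi : Phi = ((T : ℝ))⁻¹ • ∑ t, vecMulVec (ζ t) (ζ t))
    (hPsi : Psi = ((T : ℝ))⁻¹ • ∑ t, vecMulVec (ζ t) (z t))
    (hSig : Sig = ((T : ℝ))⁻¹ • ∑ t, vecMulVec (z t) (z t))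
    (P : Matrix (Fin m) (Fin m) ℝ) (hP : P.PosSemidef)
    (SigP : Matrix (Fin m) (Fin m) ℝ) (hSigP : SigP = Sig + ((T : ℝ))⁻¹ • P)
    (hSigPPD : SigP.PosDef)
    (PstarP : Matrix (Fin n) (Fin n) ℝ)
    (hPstarP : PstarP = Phi - Psi * SigP⁻¹ * Psiᵀ)
    (hPstarPPD : PstarP.PosDef)
    (LP : Matrix (Fin n) (Fin m) ℝ → Matrix (Fin n) (Fin n) ℝ → ℝ)
    (hLP : ∀ Γ Pm, LP Γ Pm = -(T : ℝ) * Real.log Pm.det -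
      (∑ t, (ζ t - Γ *ᵥ z t) ⬝ᵥ (Pm⁻¹ *ᵥ (ζ t - Γ *ᵥ z t))) -
      (Pm⁻¹ * (Γ * P * Γᵀ)).trace) :
    ∀ (Γ : Matrix (Fin n) (Fin m) ℝ) (Pm : Matrix (Fin n) (Fin n) ℝ),
      Pm.PosDef →
        LP Γ Pm ≤ LP (Psi * SigP⁻¹) PstarP ∧
        (LP Γ Pm = LP (Psi * SigP⁻¹) PstarP ↔
          (Γ = Psi * SigP⁻¹ ∧ Pm = PstarP)) := by
  intro Γ Pm hPm
  have hTpos : (0:ℝ) < T := by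
    have : 0 < T := lt_of_lt_of_le Nat.zero_lt_one hT
    exact_mod_cast this
  have hT0 : (T:ℝ) ≠ 0 := ne_of_gt hTpos
  set Gs := Psi * SigP⁻¹ with hGs
  have hSigPsym : SigPᵀ = SigP := hSigPPD.isHermitian
  have hSigPunit : IsUnit SigP.det := isUnit_iff_ne_zero.mpr (ne_of_gt hSigPPD.det_pos)
  have hGsSig : Gs * SigP = Psi := by
    rw [hGs, Matrix.mul_assoc, Matrix.nonsing_inv_mul SigP hSigPunit, Matrix.mul_one]
  have hSigGst : SigP * Gsᵀ = Psiᵀ := by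
    have h := congrArg Matrix.transpose hGsSig
    rwa [Matrix.transpose_mul, hSigPsym] at h
  have hinvsym : (SigP⁻¹)ᵀ = SigP⁻¹ := by
    rw [Matrix.transpose_nonsing_inv, hSigPsym]
  have hGsSigGs : Gs * SigP * Gsᵀ = Psi * SigP⁻¹ * Psiᵀ := by
    rw [hGsSig, hGs, Matrix.transpose_mul, hinvsym, ← Matrix.mul_assoc]
  -- key reformulation of the objective
  have hform : ∀ (G : Matrix (Fin n) (Fin m) ℝ) (Q : Matrix (Fin n) (Fin n) ℝ),
      LP G Q = -(T:ℝ) * (Real.log Q.det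
        + (Q⁻¹ * (PstarP + (G - Gs) * SigP * (G - Gs)ᵀ)).trace) := by
    intro G Q
    rw [hLP]
    -- rewrite the sum of quadratic forms as a trace
    have hsum : (∑ t, (ζ t - G *ᵥ z t) ⬝ᵥ (Q⁻¹ *ᵥ (ζ t - G *ᵥ z t)))
        = (T:ℝ) * (Q⁻¹ * (Phi - Psi * Gᵀ - G * Psiᵀ + G * Sig * Gᵀ)).trace := by
      have h1 : ∀ t, (ζ t - G *ᵥ z t) ⬝ᵥ (Q⁻¹ *ᵥ (ζ t - G *ᵥ z t))
          = (Q⁻¹ * vecMulVec (ζ t - G *ᵥ z t) (ζ t - G *ᵥ z t)).trace :=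
        fun t => dot_mulVec_eq_trace _ _
      simp_rw [h1]
      rw [← Matrix.trace_sum, ← Matrix.mul_sum,
        sum_outer_eq hT0 ζ z Phi Psi Sig hPhi hPsi hSig G,
        Matrix.mul_smul, Matrix.trace_smul, smul_eq_mul]
    rw [hsum]
    -- identity between the two matrix expressions
    have hMeq : PstarP + (G - Gs) * SigP * (G - Gs)ᵀ
        = (Phi - Psi * Gᵀ - G * Psiᵀ + G * Sig * Gᵀ) + (T:ℝ)⁻¹ • (G * P * Gᵀ) := by
      have hquad : (G - Gs) * SigP * (G - Gs)ᵀ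
          = G * SigP * Gᵀ - G * Psiᵀ - Psi * Gᵀ + Psi * SigP⁻¹ * Psiᵀ := by
        rw [Matrix.transpose_sub, Matrix.sub_mul, Matrix.sub_mul, Matrix.mul_sub,
          Matrix.mul_sub, hGsSigGs, Matrix.mul_assoc G SigP Gsᵀ, hSigGst, hGsSig]
        abel
      have hSigSplit : G * SigP * Gᵀ = G * Sig * Gᵀ + (T:ℝ)⁻¹ • (G * P * Gᵀ) := by
        simp only [hSigP, Matrix.mul_add, Matrix.add_mul, Matrix.mul_smul, Matrix.smul_mul]
      rw [hquad, hPstarP, hSigSplit]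
      abel
    rw [hMeq]
    simp only [Matrix.mul_add, Matrix.trace_add, Matrix.mul_smul, Matrix.trace_smul,
      smul_eq_mul]
    field_simp
    ring
  -- the quadratic remainder is positive semidefinite
  have hDpsd : ((Γ - Gs) * SigP * (Γ - Gs)ᵀ).PosSemidef := by
    have h := hSigPPD.posSemidef.mul_mul_conjTranspose_same (Γ - Gs)
    rwa [show ((Γ - Gs)ᴴ : Matrix (Fin m) (Fin n) ℝ) = (Γ - Gs)ᵀ from rfl] at h
  have h1 : LP Γ Pm = -(T:ℝ) * (Real.log Pm.det + (Pm⁻¹ * PstarP).trace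
      + (Pm⁻¹ * ((Γ - Gs) * SigP * (Γ - Gs)ᵀ)).trace) := by
    rw [hform Γ Pm, Matrix.mul_add, Matrix.trace_add]
    ring
  have h2 : LP Gs PstarP = -(T:ℝ) * (Real.log PstarP.det + (Fintype.card (Fin n) : ℝ)) := by
    rw [hform Gs PstarP, sub_self, Matrix.zero_mul, Matrix.zero_mul, add_zero,
      Matrix.nonsing_inv_mul PstarP (isUnit_iff_ne_zero.mpr (ne_of_gt hPstarPPD.det_pos)),
      Matrix.trace_one]
  obtain ⟨hb1, hb2⟩ := pd_loglik_bound hPstarPPD hPm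
  obtain ⟨hc1, hc2⟩ := trace_inv_psd hPm hDpsd
  have hGsGoal : (Psi * SigP⁻¹ : Matrix (Fin n) (Fin m) ℝ) = Gs := by rw [hGs]
  constructor
  · rw [h1, h2]
    have hab : Real.log PstarP.det + (Fintype.card (Fin n) : ℝ)
        ≤ Real.log Pm.det + (Pm⁻¹ * PstarP).trace
          + (Pm⁻¹ * ((Γ - Gs) * SigP * (Γ - Gs)ᵀ)).trace := by linarith
    nlinarith [mul_le_mul_of_nonneg_left hab (le_of_lt hTpos)]
  · constructor
    · intro heq
      rw [h1, h2] at heq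
      have hcanc : Real.log Pm.det + (Pm⁻¹ * PstarP).trace
          + (Pm⁻¹ * ((Γ - Gs) * SigP * (Γ - Gs)ᵀ)).trace
          = Real.log PstarP.det + (Fintype.card (Fin n) : ℝ) :=
        mul_left_cancel₀ (neg_ne_zero.mpr hT0) heq
      have htr0 : (Pm⁻¹ * ((Γ - Gs) * SigP * (Γ - Gs)ᵀ)).trace = 0 := by linarith
      have hPmeq : Pm = PstarP := hb2.mp (by linarith)
      have hD0 : (Γ - Gs) * SigP * (Γ - Gs)ᵀ = 0 := hc2.mp htr0
      have hΓ : Γ = Gs := sub_eq_zero.mp (quad_zero hSigPPD hD0)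
      exact ⟨hΓ, hPmeq⟩
    · rintro ⟨hΓ, hPmeq⟩
      rw [hΓ, hPmeq]
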